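/- Let λ be an infinite cardinal, let θ be an infinite cardinal, let A ⊆ λ with |A| = θ, and let J₀ = {}^{ω>}A be the set of finite sequences with all entries in A, regarded as a subset of the lexicographically ordered set I = ({}^{ω>}λ, <_lex). Define an equivalence relation E on I \ J₀ by: η E ν iff for every ρ ∈ J₀, ρ <_lex η ⟺ ρ <_lex ν (i.e., η and ν define the same Dedekind cut of J₀). Then E has at most θ equivalence classes. (A claim established in the proof of Lemma 3.7.) -/

import Mathlib

open Filter Cardinal

universe u

set_option linter.unusedSectionVars false

section Aux

variable {α : Type*} [LinearOrder α]

private lemma lex_cons_cons_iff' {a b : α} {as bs : List α} :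
    List.Lex (· < ·) (a :: as) (b :: bs) ↔ a < b ∨ (a = b ∧ List.Lex (· < ·) as bs) := by
  constructor
  · intro h
    cases h with
    | cons h => exact Or.inr ⟨rfl, h⟩
    | rel h => exact Or.inl h
  · rintro (h | ⟨rfl, h⟩)
    · exact List.Lex.rel h
    · exact List.Lex.cons h

private lemma cut_eq' {A : Set α} {c c' : α}
    (hc : c ∉ A) (hc' : c' ∉ A) (hcc' : ∀ a ∈ A, a < c ↔ a < c') :
    ∀ (l₁ : List α), ∀ (ρ : List α), (∀ x ∈ ρ, x ∈ A) →
      ∀ l₂ l₂' : List α,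
      (List.Lex (· < ·) ρ (l₁ ++ c :: l₂) ↔ List.Lex (· < ·) ρ (l₁ ++ c' :: l₂')) := by
  intro l₁
  induction l₁ with
  | nil =>
    intro ρ hρ l₂ l₂'
    cases ρ with
    | nil => exact iff_of_true List.Lex.nil List.Lex.nil
    | cons a ρ' =>
      have ha : a ∈ A := hρ a (by simp)
      have h1 : a ≠ c := fun h => hc (h ▸ ha)
      have h2 : a ≠ c' := fun h => hc' (h ▸ ha)
      simp only [List.nil_append]
      rw [lex_cons_cons_iff', lex_cons_cons_iff']
      constructor
      · rintro (h | ⟨rfl, -⟩)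
        · exact Or.inl ((hcc' a ha).1 h)
        · exact absurd rfl h1
      · rintro (h | ⟨rfl, -⟩)
        · exact Or.inl ((hcc' a ha).2 h)
        · exact absurd rfl h2
  | cons x t ih =>
    intro ρ hρ l₂ l₂'
    cases ρ with
    | nil => exact iff_of_true List.Lex.nil List.Lex.nil
    | cons a ρ' =>
      simp only [List.cons_append]
      rw [lex_cons_cons_iff', lex_cons_cons_iff']
      have := ih ρ' (fun y hy => hρ y (List.mem_cons_of_mem _ hy)) l₂ l₂'
      tauto

open Classical in
private noncomputable def firstBad (A : Set α) (l : List α) (h : ¬ ∀ x ∈ l, x ∈ A) : α :=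
  (l.dropWhile (fun x => decide (x ∈ A))).head (by
    intro he
    apply h
    intro x hx
    have hl : l.takeWhile (fun x => decide (x ∈ A)) = l := by
      conv_rhs => rw [← List.takeWhile_append_dropWhile (p := fun x => decide (x ∈ A)) (l := l)]
      rw [he, List.append_nil]
    rw [← hl] at hx
    simpa using List.mem_takeWhile_imp hx)

open Classical in
private lemma firstBad_not_mem (A : Set α) (l : List α) (h : ¬ ∀ x ∈ l, x ∈ A) :
    firstBad A l h ∉ A := by
  have := List.head_dropWhile_not (fun x => decide (x ∈ A)) (l := l)
    (by
      intro he
      apply h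
      intro x hx
      have hl : l.takeWhile (fun x => decide (x ∈ A)) = l := by
        conv_rhs => rw [← List.takeWhile_append_dropWhile (p := fun x => decide (x ∈ A)) (l := l)]
        rw [he, List.append_nil]
      rw [← hl] at hx
      simpa using List.mem_takeWhile_imp hx)
  simpa [firstBad] using this

open Classical in
private lemma firstBad_decomp (A : Set α) (l : List α) (h : ¬ ∀ x ∈ l, x ∈ A) :
    l = l.takeWhile (fun x => decide (x ∈ A)) ++
      firstBad A l h :: (l.dropWhile (fun x => decide (x ∈ A))).tail := by
  conv_lhs => rw [← List.takeWhile_append_dropWhile (p := fun x => decide (x ∈ A)) (l := l)]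
  congr 1
  exact (List.cons_head_tail _).symm

open Classical in
private noncomputable def nextA (A : Set α) [WellFoundedLT α] (c : α) : Option ↥A :=
  if h : ({a | a ∈ A ∧ c < a} : Set α).Nonempty then
    some ⟨wellFounded_lt.min {a | a ∈ A ∧ c < a} h,
      (wellFounded_lt.min_mem {a | a ∈ A ∧ c < a} h).1⟩
  else none

private lemma nextA_char (A : Set α) [WellFoundedLT α] {c : α} (hc : c ∉ A)
    {a : α} (ha : a ∈ A) :
    a < c ↔ (nextA A c).elim True (fun m => a < m.1) := by
  have hac : a ≠ c := fun h => hc (h ▸ ha)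
  unfold nextA
  split
  · rename_i hne
    simp only [Option.elim]
    set m := wellFounded_lt.min {a | a ∈ A ∧ c < a} hne with hm
    have hmm := wellFounded_lt.min_mem {a | a ∈ A ∧ c < a} hne
    constructor
    · intro h1
      exact h1.trans hmm.2
    · intro h2
      by_contra hcon
      have hca : c < a := lt_of_le_of_ne (not_lt.mp hcon) (Ne.symm hac)
      exact wellFounded_lt.not_lt_min {a | a ∈ A ∧ c < a} ⟨ha, hca⟩ h2
  · rename_i hne
    simp only [Option.elim, iff_true]
    rcases lt_or_gt_of_ne hac with h | h
    · exact h
    · exact absurd ⟨a, ha, h⟩ hne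

open Classical in
private noncomputable def code (A : Set α) [WellFoundedLT α] (l : List α)
    (h : ¬ ∀ x ∈ l, x ∈ A) : List ↥A × Option ↥A :=
  ((l.takeWhile (fun x => decide (x ∈ A))).attach.map
      (fun x => (⟨x.1, by simpa using List.mem_takeWhile_imp x.2⟩ : ↥A)),
   nextA A (firstBad A l h))

open Classical in
private lemma code_eq_imp (A : Set α) [WellFoundedLT α] {l l' : List α}
    (h : ¬ ∀ x ∈ l, x ∈ A) (h' : ¬ ∀ x ∈ l', x ∈ A)
    (heq : code A l h = code A l' h') :
    ∀ ρ : List α, (∀ x ∈ ρ, x ∈ A) →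
      (List.Lex (· < ·) ρ l ↔ List.Lex (· < ·) ρ l') := by
  intro ρ hρ
  have h1 : l.takeWhile (fun x => decide (x ∈ A)) = l'.takeWhile (fun x => decide (x ∈ A)) := by
    have := congrArg (fun q : List ↥A × Option ↥A => q.1.map Subtype.val) heq
    simpa [code, List.map_map, Function.comp_def, List.attach_map_subtype_val] using this
  have h2 : nextA A (firstBad A l h) = nextA A (firstBad A l' h') :=
    congrArg Prod.snd heq
  have hcc' : ∀ a ∈ A, a < firstBad A l h ↔ a < firstBad A l' h' := by
    intro a ha
    rw [nextA_char A (firstBad_not_mem A l h) ha,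
      nextA_char A (firstBad_not_mem A l' h') ha, h2]
  conv_lhs => rw [firstBad_decomp A l h]
  conv_rhs => rw [firstBad_decomp A l' h']
  rw [h1]
  exact cut_eq' (firstBad_not_mem A l h) (firstBad_not_mem A l' h') hcc' _ ρ hρ _ _

end Aux

/-- A claim established in the proof of Lemma 3.7: let `A ⊆ λ` with `|A| = θ`, let
`J₀ = ^{ω>}A` be the set of finite sequences with entries in `A` inside the
lexicographically ordered tree `I = (^{ω>}λ, <_lex)`, and let `E` be the equivalence
relation on `I \ J₀` identifying sequences that define the same Dedekind cut of `J₀`.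
Then `E` has at most `θ` equivalence classes. -/
theorem dedekind_cut_classes_le (lam θ : Cardinal.{u}) (hlam : ℵ₀ ≤ lam)
    (hθ : ℵ₀ ≤ θ) (A : Set lam.ord.ToType) (hA : Cardinal.mk A = θ) :
    Cardinal.mk
      (Quot (fun η ν : {l : List lam.ord.ToType // ¬ ∀ x ∈ l, x ∈ A} =>
        ∀ ρ : List lam.ord.ToType, (∀ x ∈ ρ, x ∈ A) →
          (ρ < η.1 ↔ ρ < ν.1))) ≤ θ := by
  classical
  rcases isEmpty_or_nonempty {l : List lam.ord.ToType // ¬ ∀ x ∈ l, x ∈ A} with hS | hS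
  · have he : IsEmpty (Quot (fun η ν : {l : List lam.ord.ToType // ¬ ∀ x ∈ l, x ∈ A} =>
        ∀ ρ : List lam.ord.ToType, (∀ x ∈ ρ, x ∈ A) → (ρ < η.1 ↔ ρ < ν.1))) :=
      ⟨fun q => Quot.inductionOn (motive := fun _ => False) q (fun a => isEmptyElim a)⟩
    rw [@Cardinal.mk_eq_zero _ he]
    exact zero_le (a := θ)
  · let f : {l : List lam.ord.ToType // ¬ ∀ x ∈ l, x ∈ A} →
        List ↥A × Option ↥A := fun η => code A η.1 η.2
    have hsurj : Function.Surjective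
        (fun p => Quot.mk (fun η ν : {l : List lam.ord.ToType // ¬ ∀ x ∈ l, x ∈ A} =>
          ∀ ρ : List lam.ord.ToType, (∀ x ∈ ρ, x ∈ A) → (ρ < η.1 ↔ ρ < ν.1))
          (Function.invFun f p)) := by
      intro q
      induction q using Quot.ind with
      | _ η =>
        refine ⟨f η, Quot.sound ?_⟩
        have hfe : f (Function.invFun f (f η)) = f η := Function.invFun_eq ⟨η, rfl⟩
        intro ρ hρ
        exact code_eq_imp A _ _ hfe ρ hρ
    have hAinf : Infinite ↥A := by
      rw [Cardinal.infinite_iff, hA]; exact hθ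
    have hOk : Cardinal.mk (List ↥A × Option ↥A) = θ := by
      rw [Cardinal.mk_prod, Cardinal.lift_id, Cardinal.lift_id, Cardinal.mk_list_eq_mk,
        Cardinal.mk_option, hA, Cardinal.add_one_eq hθ, Cardinal.mul_eq_self hθ]
    exact le_trans (Cardinal.mk_le_of_surjective hsurj) hOk.le
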